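/- Let R = [[-1/2, √3/2], [-√3/2, -1/2]] and τ = exp(2πi/3). Let B : ℝ² → M₂(ℂ) be measurable with B(R⁻¹x) = R⁻¹ B(x) R for all x ∈ ℝ², and let E ⊆ ℝ² be a measurable set with R⁻¹(E) = E. Let w₁, w₂ : ℝ² → ℂ be differentiable with w₁(R⁻¹x) = τ·w₁(x) and w₂(R⁻¹x) = conj(τ)·w₂(x) for all x ∈ ℝ². Assume that g(x) := conj(∇w₂(x))ᵀ B(x) ∇w₁(x) is integrable on E. Then ∫_E g(x) dx = 0. -/

import Mathlib

open Complex ComplexConjugate MeasureTheory Matrix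

/-- The clockwise rotation by `2π/3`: `R = [[-1/2, √3/2],[-√3/2, -1/2]]`. -/
noncomputable def Rm : Matrix (Fin 2) (Fin 2) ℝ :=
  !![-(1/2), Real.sqrt 3 / 2; -(Real.sqrt 3) / 2, -(1/2)]

/-- `R` regarded as a complex matrix. -/
noncomputable def Rc : Matrix (Fin 2) (Fin 2) ℂ := Rm.map Complex.ofReal

/-- `τ = exp(2πi/3)`. -/
noncomputable def τ : ℂ := Complex.exp (2 * Real.pi * Complex.I / 3)

/-- The gradient of a function `w : ℝ² → ℂ`: the vector of its partial derivatives at `x`. -/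
noncomputable def grad (w : (Fin 2 → ℝ) → ℂ) (x : Fin 2 → ℝ) : Fin 2 → ℂ :=
  fun i => fderiv ℝ w x (Pi.single i 1)

lemma sqrt3_sq : Real.sqrt 3 * Real.sqrt 3 = 3 :=
  Real.mul_self_sqrt (by norm_num)

lemma Rm_transpose_eq :
    Rmᵀ = !![-(1/2), -(Real.sqrt 3) / 2; Real.sqrt 3 / 2, -(1/2)] := by
  ext i j
  fin_cases i <;> fin_cases j <;> simp [Rm, Matrix.transpose_apply]

lemma Rm_mul_transpose : Rm * Rmᵀ = 1 := by
  have h := sqrt3_sq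
  rw [Rm_transpose_eq]
  ext i j
  fin_cases i <;> fin_cases j <;>
    simp [Rm, Matrix.mul_apply, Fin.sum_univ_two, Matrix.one_apply] <;>
    nlinarith [h]

lemma Rm_transpose_mul : Rmᵀ * Rm = 1 := by
  have h := sqrt3_sq
  rw [Rm_transpose_eq]
  ext i j
  fin_cases i <;> fin_cases j <;>
    simp [Rm, Matrix.mul_apply, Fin.sum_univ_two, Matrix.one_apply] <;>
    nlinarith [h]

lemma Rm_det : Rm.det = 1 := by
  have h := sqrt3_sq
  simp [Rm, Matrix.det_fin_two]; nlinarith [h]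

lemma Rm_inv : Rm⁻¹ = Rmᵀ := Matrix.inv_eq_right_inv Rm_mul_transpose

lemma Rc_mul_transpose : Rc * Rcᵀ = 1 := by
  have hc : ((Real.sqrt 3 : ℝ) : ℂ) ^ 2 = 3 := by
    rw [← Complex.ofReal_pow, sq, sqrt3_sq]; norm_num
  ext i j
  fin_cases i <;> fin_cases j <;>
    simp [Rc, Rm, Matrix.mul_apply, Matrix.transpose_apply, Matrix.map_apply,
      Fin.sum_univ_two, Matrix.one_apply] <;>
    push_cast <;>
    (try ring) <;>
    linear_combination hc / 4

lemma Rc_inv : Rc⁻¹ = Rcᵀ := Matrix.inv_eq_right_inv Rc_mul_transpose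

lemma Rm_inv_mulVec_cancel (v : Fin 2 → ℝ) : Rm⁻¹.mulVec (Rm.mulVec v) = v := by
  rw [Matrix.mulVec_mulVec, Rm_inv, Rm_transpose_mul, Matrix.one_mulVec]

lemma Rm_mulVec_inv_cancel (v : Fin 2 → ℝ) : Rm.mulVec (Rm⁻¹.mulVec v) = v := by
  rw [Matrix.mulVec_mulVec, Rm_inv, Rm_mul_transpose, Matrix.one_mulVec]

/-- expansion of a continuous linear map into ℂ along the basis of ℝ². -/
lemma clm_expand (φ : (Fin 2 → ℝ) →L[ℝ] ℂ) (v : Fin 2 → ℝ) :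
    φ v = (v 0 : ℂ) * φ (Pi.single 0 1) + (v 1 : ℂ) * φ (Pi.single 1 1) := by
  have hv : v = v 0 • (Pi.single 0 1 : Fin 2 → ℝ) + v 1 • (Pi.single 1 1 : Fin 2 → ℝ) := by
    funext i; fin_cases i <;> simp [Pi.single_apply]
  conv_lhs => rw [hv]
  rw [map_add, ContinuousLinearMap.map_smul, ContinuousLinearMap.map_smul]
  simp [Complex.real_smul]

/-- chain rule for the rotation eigenfunction relation. -/
lemma fderiv_rot (w : (Fin 2 → ℝ) → ℂ) (c : ℂ) (hw : Differentiable ℝ w)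
    (h : ∀ x, w (Rm⁻¹.mulVec x) = c * w x) (x v : Fin 2 → ℝ) :
    fderiv ℝ w (Rm⁻¹.mulVec x) (Rm⁻¹.mulVec v) = c * fderiv ℝ w x v := by
  set L : (Fin 2 → ℝ) →L[ℝ] (Fin 2 → ℝ) :=
    LinearMap.toContinuousLinearMap (Matrix.mulVecLin Rm⁻¹) with hLdef
  have hL : ∀ y, L y = Rm⁻¹.mulVec y := fun y => rfl
  have h1 : HasFDerivAt (fun y => w (L y)) ((fderiv ℝ w (L x)).comp L) x :=
    (hw (L x)).hasFDerivAt.comp x L.hasFDerivAt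
  have h2 : HasFDerivAt (fun y => c * w y) (c • fderiv ℝ w x) x :=
    ((hw x).hasFDerivAt).const_mul c
  have heq : (fun y => w (L y)) = fun y => c * w y := funext fun y => by rw [hL, h y]
  rw [heq] at h1
  have h3 := h1.unique h2
  have := congrArg (fun φ => φ v) h3
  simpa [hL] using this

lemma grad_rot (w : (Fin 2 → ℝ) → ℂ) (c : ℂ) (hw : Differentiable ℝ w)
    (h : ∀ x, w (Rm⁻¹.mulVec x) = c * w x) (x : Fin 2 → ℝ) :
    grad w (Rm⁻¹.mulVec x) = c • (Rcᵀ.mulVec (grad w x)) := by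
  funext i
  have h1 : (Pi.single i 1 : Fin 2 → ℝ) = Rm⁻¹.mulVec (Rm.mulVec (Pi.single i 1)) :=
    (Rm_inv_mulVec_cancel _).symm
  have h2 : grad w (Rm⁻¹.mulVec x) i
      = c * fderiv ℝ w x (Rm.mulVec (Pi.single i 1)) := by
    show fderiv ℝ w (Rm⁻¹.mulVec x) (Pi.single i 1) = _
    conv_lhs => rw [h1]
    exact fderiv_rot w c hw h x _
  rw [h2]
  have h3 : fderiv ℝ w x (Rm.mulVec (Pi.single i 1))
      = (Rcᵀ.mulVec (grad w x)) i := by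
    rw [clm_expand]
    simp [Matrix.mulVec, dotProduct, Fin.sum_univ_two, Rc, grad, Matrix.transpose_apply,
      Pi.single_apply]
    try ring
  rw [h3]
  simp [Pi.smul_apply]

lemma dot_form (u v : Fin 2 → ℂ) (M : Matrix (Fin 2) (Fin 2) ℂ) :
    ∑ k : Fin 2, ∑ l : Fin 2, u k * M k l * v l = dotProduct u (M.mulVec v) := by
  simp [dotProduct, Matrix.mulVec, Fin.sum_univ_two]; ring

lemma key_reduce (M : Matrix (Fin 2) (Fin 2) ℂ) (u v : Fin 2 → ℂ) :
    dotProduct (Rcᵀ.mulVec u) ((Rcᵀ * M * Rc).mulVec (Rcᵀ.mulVec v))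
      = dotProduct u (M.mulVec v) := by
  rw [Matrix.mulVec_mulVec]
  have h1 : Rcᵀ * M * Rc * Rcᵀ = Rcᵀ * M := by
    rw [mul_assoc, Rc_mul_transpose, mul_one]
  rw [h1, ← Matrix.mulVec_mulVec, Matrix.mulVec_transpose, Matrix.dotProduct_mulVec,
    Matrix.vecMul_vecMul, Rc_mul_transpose, Matrix.vecMul_one]

lemma tau_cube : τ ^ 3 = 1 := by
  rw [τ, ← Complex.exp_nat_mul]
  have : ((3 : ℕ) : ℂ) * (2 * Real.pi * Complex.I / 3) = 2 * Real.pi * Complex.I := by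
    push_cast; ring
  rw [this, Complex.exp_two_pi_mul_I]

lemma tau_ne_one : τ ≠ 1 := by
  have h : τ = Complex.exp ((2 * Real.pi / 3 : ℝ) * Complex.I) := by
    rw [τ]; congr 1; push_cast; ring
  intro hc
  rw [h] at hc
  have h1 : (Complex.exp ((2 * Real.pi / 3 : ℝ) * Complex.I)).re = 1 := by
    rw [hc]; simp
  rw [Complex.exp_ofReal_mul_I_re] at h1
  have h2 : Real.cos (2 * Real.pi / 3) = -(1/2) := by
    have h3 : (2 * Real.pi / 3 : ℝ) = Real.pi - Real.pi/3 := by ring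
    rw [h3, Real.cos_pi_sub, Real.cos_pi_div_three]
  rw [h2] at h1
  norm_num at h1

lemma tau_sq_ne_one : τ ^ 2 ≠ 1 := by
  intro h
  apply tau_ne_one
  rw [← tau_cube, pow_succ, h, one_mul]

/-- under rotational invariance of `B` and of `E`, and rotation
eigenvalues `τ`, `conj τ` for `w₁`, `w₂`, the off-diagonal integral
`∫_E conj(∇w₂)ᵀ B ∇w₁` vanishes. -/
theorem statement7 (B : (Fin 2 → ℝ) → Matrix (Fin 2) (Fin 2) ℂ)
    (hBmeas : ∀ k l, Measurable fun x => B x k l)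
    (hBsym : ∀ x, B (Rm⁻¹.mulVec x) = Rc⁻¹ * B x * Rc)
    (E : Set (Fin 2 → ℝ)) (hE : MeasurableSet E) (hER : Rm.mulVec ⁻¹' E = E)
    (w₁ w₂ : (Fin 2 → ℝ) → ℂ) (hw₁ : Differentiable ℝ w₁) (hw₂ : Differentiable ℝ w₂)
    (hw₁R : ∀ x, w₁ (Rm⁻¹.mulVec x) = τ * w₁ x)
    (hw₂R : ∀ x, w₂ (Rm⁻¹.mulVec x) = (starRingEnd ℂ) τ * w₂ x)
    (hint : IntegrableOn
      (fun x => ∑ k : Fin 2, ∑ l : Fin 2, conj (grad w₂ x k) * B x k l * grad w₁ x l) E) :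
    (∫ x in E, ∑ k : Fin 2, ∑ l : Fin 2, conj (grad w₂ x k) * B x k l * grad w₁ x l) = 0 := by
  set f : (Fin 2 → ℝ) → ℂ :=
    fun x => ∑ k : Fin 2, ∑ l : Fin 2, conj (grad w₂ x k) * B x k l * grad w₁ x l with hf
  -- pointwise identity
  have hpt : ∀ x, f (Rm⁻¹.mulVec x) = τ ^ 2 * f x := by
    intro x
    have hg1 := grad_rot w₁ τ hw₁ hw₁R x
    have hg2 := grad_rot w₂ (conj τ) hw₂ hw₂R x
    have hcg2 : ∀ k, conj (grad w₂ (Rm⁻¹.mulVec x) k)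
        = τ * (Rcᵀ.mulVec (fun j => conj (grad w₂ x j))) k := by
      intro k
      have hr : ∀ j, conj (Rcᵀ k j) = Rcᵀ k j := by
        intro j; simp [Rc, Matrix.transpose_apply, Complex.conj_ofReal]
      rw [hg2]
      simp only [Pi.smul_apply, smul_eq_mul, Matrix.mulVec, dotProduct,
        Fin.sum_univ_two]
      rw [_root_.map_mul, map_add, _root_.map_mul, _root_.map_mul, Complex.conj_conj,
        hr 0, hr 1]
    have hB := hBsym x
    rw [Rc_inv] at hB
    calc f (Rm⁻¹.mulVec x)
        = ∑ k : Fin 2, ∑ l : Fin 2,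
            (τ * (Rcᵀ.mulVec (fun j => conj (grad w₂ x j))) k)
            * (Rcᵀ * B x * Rc) k l
            * (τ * (Rcᵀ.mulVec (grad w₁ x)) l) := by
          rw [hf]
          refine Finset.sum_congr rfl fun k _ => Finset.sum_congr rfl fun l _ => ?_
          rw [hcg2, hB, hg1]
          simp [smul_eq_mul]
      _ = τ ^ 2 * ∑ k : Fin 2, ∑ l : Fin 2,
            (Rcᵀ.mulVec (fun j => conj (grad w₂ x j))) k
            * (Rcᵀ * B x * Rc) k l
            * (Rcᵀ.mulVec (grad w₁ x)) l := by
          simp [Finset.mul_sum, Fin.sum_univ_two]; ring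
      _ = τ ^ 2 * f x := by
          rw [dot_form, key_reduce]
          congr 1
          rw [hf]
          exact (dot_form _ _ _).symm
  -- measure preservation and change of variables
  have hdetinv : Rm⁻¹.det = 1 := by
    rw [Rm_inv, Matrix.det_transpose, Rm_det]
  have hdetLM : LinearMap.det (Matrix.mulVecLin Rm⁻¹) = 1 := by
    rw [← Matrix.toLin'_apply', LinearMap.det_toLin', hdetinv]
  have hmap : Measure.map (fun x => Rm⁻¹.mulVec x) (volume : Measure (Fin 2 → ℝ)) = volume := by
    have := Real.map_linearMap_volume_pi_eq_smul_volume_pi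
      (f := Matrix.mulVecLin Rm⁻¹) (by rw [hdetLM]; norm_num)
    rw [hdetLM] at this
    norm_num at this
    exact this
  have hmeas : Measurable fun x : Fin 2 → ℝ => Rm⁻¹.mulVec x :=
    (Matrix.mulVecLin Rm⁻¹).continuous_of_finiteDimensional.measurable
  have hmeas' : Measurable fun x : Fin 2 → ℝ => Rm.mulVec x :=
    (Matrix.mulVecLin Rm).continuous_of_finiteDimensional.measurable
  have hMP : MeasurePreserving (fun x => Rm⁻¹.mulVec x)
      (volume : Measure (Fin 2 → ℝ)) volume := ⟨hmeas, hmap⟩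
  have hemb : MeasurableEmbedding (fun x : Fin 2 → ℝ => Rm⁻¹.mulVec x) := by
    exact MeasurableEquiv.measurableEmbedding
      { toFun := fun x => Rm⁻¹.mulVec x
        invFun := fun x => Rm.mulVec x
        left_inv := Rm_mulVec_inv_cancel
        right_inv := Rm_inv_mulVec_cancel
        measurable_toFun := hmeas
        measurable_invFun := hmeas' }
  have hpre : (fun x : Fin 2 → ℝ => Rm⁻¹.mulVec x) ⁻¹' E = E := by
    ext x
    constructor
    · intro hx
      have : Rm.mulVec (Rm⁻¹.mulVec x) ∈ E := by
        rw [← hER] at hx; exact hx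
      rwa [Rm_mulVec_inv_cancel] at this
    · intro hx
      show Rm⁻¹.mulVec x ∈ E
      rw [← hER]
      show Rm.mulVec (Rm⁻¹.mulVec x) ∈ E
      rwa [Rm_mulVec_inv_cancel]
  have hCOV : ∫ x in (fun x : Fin 2 → ℝ => Rm⁻¹.mulVec x) ⁻¹' E, f (Rm⁻¹.mulVec x)
      = ∫ x in E, f x := hMP.setIntegral_preimage_emb hemb f E
  rw [hpre] at hCOV
  have : ∫ x in E, f x = τ ^ 2 * ∫ x in E, f x := by
    calc ∫ x in E, f x = ∫ x in E, f (Rm⁻¹.mulVec x) := hCOV.symm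
      _ = ∫ x in E, τ ^ 2 * f x := by simp_rw [hpt]
      _ = τ ^ 2 * ∫ x in E, f x := by rw [integral_const_mul]
  have hzero : (τ ^ 2 - 1) * ∫ x in E, f x = 0 := by linear_combination -this
  rcases mul_eq_zero.mp hzero with h | h
  · exact absurd (by linear_combination h) tau_sq_ne_one
  · exact h
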